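/- Suppose m = n and G₀ ∈ ℝ^{n×n} is invertible, so that σ = ‖G₀⁻¹‖⁻¹ (operator norm). Let x ∈ ℝⁿ satisfy (L_f + L_G)·‖x‖ ≤ σ, and for a unit vector d ∈ ℝⁿ define K(d) = (σ − L_G‖x‖ − L_f‖x‖) / (‖G₀⁻¹d‖·(σ − L_G‖x‖) + ‖G₀⁻¹‖·L_G‖x‖). Then for every unit vector d ∈ ℝⁿ, ‖G₀⁻¹d‖·(σ − L_G‖x‖) + ‖G₀⁻¹‖·L_G‖x‖ ≤ 1, and hence σ − (L_f + L_G)‖x‖ ≤ K(d); consequently, the closed ball B(f₀; σ − (L_f + L_G)‖x‖) is contained in the set {f₀ + k·d : d ∈ ℝⁿ, ‖d‖ = 1, 0 ≤ k ≤ K(d)}. -/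

import Mathlib

open Matrix Set

noncomputable def matOpNorm {n m : ℕ} (M : Matrix (Fin n) (Fin m) ℝ) : ℝ :=
  ‖LinearMap.toContinuousLinearMap (Matrix.toEuclideanLin M)‖

noncomputable def appMat {n m : ℕ} (M : Matrix (Fin n) (Fin m) ℝ)
    (v : EuclideanSpace ℝ (Fin m)) : EuclideanSpace ℝ (Fin n) :=
  Matrix.toEuclideanLin M v

noncomputable def colSpace {n m : ℕ} (M : Matrix (Fin n) (Fin m) ℝ) :
    Submodule ℝ (EuclideanSpace ℝ (Fin n)) :=
  LinearMap.range (Matrix.toEuclideanLin M)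

noncomputable def minSV {n m : ℕ} (M : Matrix (Fin n) (Fin m) ℝ) : ℝ :=
  Real.sqrt (sInf {μ : ℝ | μ ≠ 0 ∧
    ∃ i, (show (Mᵀ * M).IsHermitian by
      simpa only [Matrix.conjTranspose_eq_transpose_of_trivial] using
        Matrix.isHermitian_conjTranspose_mul_self M).eigenvalues i = μ})

lemma appMat_inv_cancel {n : ℕ} (G₀ : Matrix (Fin n) (Fin n) ℝ) (hG₀ : IsUnit G₀)
    (d : EuclideanSpace ℝ (Fin n)) : appMat G₀ (appMat G₀⁻¹ d) = d := by
  simp only [appMat, Matrix.toEuclideanLin_apply]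
  rw [Matrix.mulVec_mulVec,
    Matrix.mul_nonsing_inv _ ((Matrix.isUnit_iff_isUnit_det _).mp hG₀),
    Matrix.one_mulVec, WithLp.toLp_ofLp]

lemma le_matOpNorm {n m : ℕ} (M : Matrix (Fin n) (Fin m) ℝ)
    (v : EuclideanSpace ℝ (Fin m)) : ‖appMat M v‖ ≤ matOpNorm M * ‖v‖ :=
  (LinearMap.toContinuousLinearMap (Matrix.toEuclideanLin M)).le_opNorm v

/-- **Corollary 2.** For invertible `G₀` (so `σ = ‖G₀⁻¹‖⁻¹`), for every
unit vector `d` the denominator of `K(d)` is at most `1`, hence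
`σ − (L_f + L_G)‖x‖ ≤ K(d)`; consequently the closed ball
`B(f₀; σ − (L_f + L_G)‖x‖)` is contained in `{f₀ + k • d : ‖d‖ = 1, 0 ≤ k ≤ K(d)}`. -/
theorem corollary2_ball_in_polytope {n : ℕ} (hn : 0 < n) (Lf LG : ℝ)
    (hLf : 0 < Lf) (hLG : 0 < LG)
    (f₀ : EuclideanSpace ℝ (Fin n))
    (G₀ : Matrix (Fin n) (Fin n) ℝ) (hG₀ : IsUnit G₀)
    (σ : ℝ) (hσ : σ = (matOpNorm G₀⁻¹)⁻¹)
    (x : EuclideanSpace ℝ (Fin n)) (hx : (Lf + LG) * ‖x‖ ≤ σ)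
    (K : EuclideanSpace ℝ (Fin n) → ℝ)
    (hK : ∀ d, K d = (σ - LG * ‖x‖ - Lf * ‖x‖) /
      (‖appMat G₀⁻¹ d‖ * (σ - LG * ‖x‖) + matOpNorm G₀⁻¹ * (LG * ‖x‖))) :
    (∀ d : EuclideanSpace ℝ (Fin n), ‖d‖ = 1 →
      ‖appMat G₀⁻¹ d‖ * (σ - LG * ‖x‖) + matOpNorm G₀⁻¹ * (LG * ‖x‖) ≤ 1 ∧
      σ - (Lf + LG) * ‖x‖ ≤ K d) ∧
    Metric.closedBall f₀ (σ - (Lf + LG) * ‖x‖) ⊆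
      {v | ∃ (d : EuclideanSpace ℝ (Fin n)) (k : ℝ),
        ‖d‖ = 1 ∧ 0 ≤ k ∧ k ≤ K d ∧ v = f₀ + k • d} := by
  have hninst : Nonempty (Fin n) := ⟨⟨0, hn⟩⟩
  set N := matOpNorm G₀⁻¹ with hN
  -- N > 0
  have hMne : G₀⁻¹ ≠ 0 := by
    intro h
    have h2 := appMat_inv_cancel G₀ hG₀ (EuclideanSpace.single ⟨0, hn⟩ (1:ℝ))
    rw [h] at h2
    simp only [appMat, map_zero, LinearMap.zero_apply] at h2
    have h1 := congrArg norm h2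
    rw [EuclideanSpace.norm_single] at h1; simp at h1
  have hNpos : 0 < N := by
    rw [hN, matOpNorm]
    rw [norm_pos_iff]
    intro h
    apply hMne
    have h2 : Matrix.toEuclideanLin G₀⁻¹ = 0 :=
      (LinearMap.toContinuousLinearMap.map_eq_zero_iff).mp h
    exact (Matrix.toEuclideanLin.map_eq_zero_iff).mp h2
  have hσpos : 0 < σ := by rw [hσ]; positivity
  have hσN : σ * N = 1 := by rw [hσ]; field_simp
  have hxnn : (0:ℝ) ≤ ‖x‖ := norm_nonneg _
  have hLGx : LG * ‖x‖ ≤ σ := by nlinarith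
  have hnum : 0 ≤ σ - LG * ‖x‖ - Lf * ‖x‖ := by nlinarith
  have hσLG : 0 ≤ σ - LG * ‖x‖ := by nlinarith
  -- positivity of appMat G₀⁻¹ d for unit d, and denominator positivity
  have hden : ∀ d : EuclideanSpace ℝ (Fin n), ‖d‖ = 1 →
      0 < ‖appMat G₀⁻¹ d‖ * (σ - LG * ‖x‖) + N * (LG * ‖x‖) := by
    intro d hd
    have hdne : appMat G₀⁻¹ d ≠ 0 := by
      intro h
      have := appMat_inv_cancel G₀ hG₀ d
      rw [h] at this
      simp only [appMat, map_zero] at this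
      rw [← this] at hd; simp at hd
    have h1 : 0 < ‖appMat G₀⁻¹ d‖ := norm_pos_iff.mpr hdne
    rcases eq_or_lt_of_le hxnn with h | h
    · have : LG * ‖x‖ = 0 := by rw [← h]; ring
      rw [this]; nlinarith
    · nlinarith [mul_pos hNpos (mul_pos hLG h), mul_nonneg h1.le hσLG]
  have hdenle : ∀ d : EuclideanSpace ℝ (Fin n), ‖d‖ = 1 →
      ‖appMat G₀⁻¹ d‖ * (σ - LG * ‖x‖) + N * (LG * ‖x‖) ≤ 1 := by
    intro d hd
    have h1 : ‖appMat G₀⁻¹ d‖ ≤ N := by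
      have := le_matOpNorm G₀⁻¹ d; rw [hd] at this; simpa using this
    nlinarith
  have hKge : ∀ d : EuclideanSpace ℝ (Fin n), ‖d‖ = 1 → σ - (Lf + LG) * ‖x‖ ≤ K d := by
    intro d hd
    rw [hK d]
    have hD := hden d hd
    have hDle := hdenle d hd
    have heq : σ - (Lf + LG) * ‖x‖ = σ - LG * ‖x‖ - Lf * ‖x‖ := by ring
    rw [heq, le_div_iff₀ hD]
    nlinarith [mul_nonneg hnum (sub_nonneg.2 hDle)]
  refine ⟨fun d hd => ⟨hdenle d hd, hKge d hd⟩, ?_⟩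
  intro v hv
  rw [Metric.mem_closedBall, dist_eq_norm] at hv
  by_cases h0 : v = f₀
  · refine ⟨EuclideanSpace.single ⟨0, hn⟩ (1:ℝ), 0, ?_, le_refl _, ?_, by simp [h0]⟩
    · rw [EuclideanSpace.norm_single]; simp
    · have hd : ‖(EuclideanSpace.single (⟨0, hn⟩ : Fin n) (1:ℝ))‖ = 1 := by
        rw [EuclideanSpace.norm_single]; simp
      have := hKge _ hd
      nlinarith
  · set w := v - f₀ with hw
    have hwne : w ≠ 0 := sub_ne_zero.mpr h0
    have hwpos : 0 < ‖w‖ := norm_pos_iff.mpr hwne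
    refine ⟨‖w‖⁻¹ • w, ‖w‖, ?_, le_of_lt hwpos, ?_, ?_⟩
    · rw [norm_smul]; simp [abs_of_pos hwpos]; field_simp
    · have hd : ‖(‖w‖⁻¹ • w)‖ = 1 := by
        rw [norm_smul]; simp [abs_of_pos hwpos]; field_simp
      exact le_trans hv (hKge _ hd)
    · rw [smul_smul, mul_inv_cancel₀ (ne_of_gt hwpos), one_smul, hw]
      abel
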